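/- arXiv:1908.10855 — 2 statements merged into one kernel-verified Lean document; each statement's English description precedes it below -/
import Mathlib

section
/- Let A_n = E[det G] where G is a symmetric n×n Gaussian matrix with N(0,1) off-diagonal and N(0,2) diagonal entries. Then A_n satisfies the recursion A_n = -(n-1)·A_{n-2} for n ≥ 2, with A_1 = 0 and A_2 = -1. -/
open Equiv Finset

def MSet (n : ℕ) : Finset (Equiv.Perm (Fin n)) :=
  Finset.univ.filter (fun σ => σ * σ = 1 ∧ ∀ i, σ i ≠ i)

lemma mem_MSet {n : ℕ} {σ : Equiv.Perm (Fin n)} :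
    σ ∈ MSet n ↔ σ * σ = 1 ∧ ∀ i, σ i ≠ i := by simp [MSet]

noncomputable def Bc (n : ℕ) : ℤ := ∑ σ ∈ MSet n, (Equiv.Perm.sign σ : ℤ)

section Rec
variable {n : ℕ} (b : Fin (n + 2))

abbrev lst : Fin (n + 2) := Fin.last (n + 1)

abbrev Pc (b : Fin (n+2)) : Fin (n+2) → Prop := fun x => x ≠ lst ∧ x ≠ b

lemma not_Pc_iff {x : Fin (n+2)} : ¬ Pc b x ↔ x = lst ∨ x = b := by
  by_cases h1 : x = lst <;> by_cases h2 : x = b <;> simp [Pc, h1, h2]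

lemma card_Pc (hb : b ≠ lst) : Fintype.card {x // Pc b x} = n := by
  rw [Fintype.card_subtype]
  have h : Finset.univ.filter (Pc b) = (Finset.univ.erase b).erase lst := by
    ext x; simp [Pc, and_comm]
  rw [h, Finset.card_erase_of_mem (Finset.mem_erase.2 ⟨fun h => hb h.symm, Finset.mem_univ _⟩),
    Finset.card_erase_of_mem (Finset.mem_univ _)]
  simp

noncomputable def eb (hb : b ≠ lst) : Fin n ≃ {x // Pc b x} :=
  (Fintype.equivFinOfCardEq (card_Pc b hb)).symm

noncomputable def fwd (hb : b ≠ lst) (τ : Equiv.Perm (Fin n)) : Equiv.Perm (Fin (n+2)) :=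
  Equiv.swap lst b * τ.extendDomain (eb b hb)

lemma not_Pc_lst : ¬ Pc b lst := by simp [Pc]
lemma not_Pc_b : ¬ Pc b b := by simp [Pc]

variable (hb : b ≠ lst)

lemma fwd_apply_lst (τ) : fwd b hb τ lst = b := by
  simp [fwd, Equiv.Perm.mul_apply, Equiv.Perm.extendDomain_apply_not_subtype _ _ (not_Pc_lst b),
    Equiv.swap_apply_left]

lemma fwd_apply_b (τ) : fwd b hb τ b = lst := by
  simp [fwd, Equiv.Perm.mul_apply, Equiv.Perm.extendDomain_apply_not_subtype _ _ (not_Pc_b b),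
    Equiv.swap_apply_right]

lemma fwd_apply_Pc (τ) {x : Fin (n+2)} (hx : Pc b x) :
    fwd b hb τ x = ((eb b hb) (τ ((eb b hb).symm ⟨x, hx⟩)) : Fin (n+2)) := by
  rw [fwd, Equiv.Perm.mul_apply, Equiv.Perm.extendDomain_apply_subtype _ _ hx]
  exact Equiv.swap_apply_of_ne_of_ne (((eb b hb) _).2.1) (((eb b hb) _).2.2)

lemma fwd_mem (τ : Equiv.Perm (Fin n)) (hτ : τ ∈ MSet n) :
    fwd b hb τ ∈ MSet (n+2) ∧ fwd b hb τ lst = b := by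
  obtain ⟨hτ2, hτf⟩ := mem_MSet.1 hτ
  refine ⟨mem_MSet.2 ⟨?_, ?_⟩, fwd_apply_lst b hb τ⟩
  · ext x
    by_cases hx : Pc b x
    · have h1 := fwd_apply_Pc b hb τ hx
      rw [Equiv.Perm.mul_apply, h1]
      have h2 := fwd_apply_Pc b hb τ (x := ((eb b hb) (τ ((eb b hb).symm ⟨x, hx⟩)) : Fin (n+2)))
        ((eb b hb) _).2
      rw [h2]
      have h3 : (⟨((eb b hb) (τ ((eb b hb).symm ⟨x, hx⟩)) : Fin (n+2)), ((eb b hb) _).2⟩ :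
          {x // Pc b x}) = (eb b hb) (τ ((eb b hb).symm ⟨x, hx⟩)) := rfl
      rw [h3, Equiv.symm_apply_apply]
      have h4 : τ (τ ((eb b hb).symm ⟨x, hx⟩)) = (eb b hb).symm ⟨x, hx⟩ := by
        have := congrArg (fun σ => σ ((eb b hb).symm ⟨x, hx⟩)) hτ2
        simpa [Equiv.Perm.mul_apply] using this
      rw [h4]; simp
    · rcases (not_Pc_iff b).1 hx with h | h <;> rw [h] <;>
        simp [Equiv.Perm.mul_apply, fwd_apply_lst b hb τ, fwd_apply_b b hb τ]
  · intro x
    by_cases hx : Pc b x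
    · rw [fwd_apply_Pc b hb τ hx]
      intro h
      have h1 : (eb b hb) (τ ((eb b hb).symm ⟨x, hx⟩)) = ⟨x, hx⟩ := Subtype.ext h
      have h2 : τ ((eb b hb).symm ⟨x, hx⟩) = (eb b hb).symm ⟨x, hx⟩ := by
        have := congrArg (eb b hb).symm h1
        simpa using this
      exact hτf _ h2
    · rcases (not_Pc_iff b).1 hx with h | h <;> rw [h]
      · rw [fwd_apply_lst b hb τ]; exact hb
      · rw [fwd_apply_b b hb τ]; exact fun h => hb h.symm

lemma fwd_sign (τ : Equiv.Perm (Fin n)) :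
    Equiv.Perm.sign (fwd b hb τ) = - Equiv.Perm.sign τ := by
  rw [fwd, map_mul, Equiv.Perm.sign_swap (fun h => hb h.symm), Equiv.Perm.sign_extendDomain,
    neg_one_mul]

lemma fwd_inj : Function.Injective (fwd b hb) := by
  intro τ τ' h
  have h2 : τ.extendDomain (eb b hb) = τ'.extendDomain (eb b hb) := by
    have := congrArg (fun σ => (Equiv.swap (lst (n := n)) b)⁻¹ * σ) h
    simpa [fwd, ← mul_assoc] using this
  ext x
  have h3 := congrArg (fun σ : Equiv.Perm (Fin (n+2)) => σ ((eb b hb x : Fin (n+2)))) h2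
  simp only [Equiv.Perm.extendDomain_apply_image] at h3
  have h4 : (eb b hb) (τ x) = (eb b hb) (τ' x) := Subtype.ext (by simpa using h3)
  exact congrArg Fin.val ((eb b hb).injective h4)

lemma fwd_surj (σ : Equiv.Perm (Fin (n+2))) (hσ : σ ∈ MSet (n+2)) (hσl : σ lst = b) :
    ∃ τ ∈ MSet n, fwd b hb τ = σ := by
  obtain ⟨hσ2, hσf⟩ := mem_MSet.1 hσ
  have hσσ : ∀ x, σ (σ x) = x := fun x => by
    have := congrArg (fun s => s x) hσ2; simpa [Equiv.Perm.mul_apply] using this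
  have hσb : σ b = lst := by rw [← hσl, hσσ]
  set ρ : Equiv.Perm (Fin (n+2)) := Equiv.swap lst b * σ with hρ
  have hρ_apply : ∀ x, ρ x = Equiv.swap lst b (σ x) := fun x => rfl
  have hσPc : ∀ x, Pc b x → Pc b (σ x) := by
    rintro x ⟨h1, h2⟩
    constructor
    · exact fun h => h2 (σ.injective (h.trans hσb.symm))
    · exact fun h => h1 (σ.injective (h.trans hσl.symm))
  have hρPc : ∀ x, Pc b x → ρ x = σ x := by
    intro x hx
    rw [hρ_apply]
    exact Equiv.swap_apply_of_ne_of_ne (hσPc x hx).1 (hσPc x hx).2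
  have hpres : ∀ x, Pc b x ↔ Pc b (ρ x) := by
    intro x
    constructor
    · intro hx; rw [hρPc x hx]; exact hσPc x hx
    · intro hx
      by_contra hxn
      rcases (not_Pc_iff b).1 hxn with h | h <;> rw [h] at hx
      · rw [hρ_apply, hσl, Equiv.swap_apply_right] at hx; exact (not_Pc_lst b) hx
      · rw [hρ_apply, hσb, Equiv.swap_apply_left] at hx; exact (not_Pc_b b) hx
  set τ : Equiv.Perm (Fin n) := ((eb b hb).symm.permCongr (ρ.subtypePerm (fun x => (hpres x).symm))) with hτ
  have hτ_apply : ∀ x : Fin n, τ x = (eb b hb).symm ⟨ρ (eb b hb x),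
      (hpres _).1 ((eb b hb x).2)⟩ := by
    intro x
    simp [hτ, Equiv.permCongr_apply, Equiv.Perm.subtypePerm_apply]
  have hext : τ.extendDomain (eb b hb) = ρ := by
    ext x
    by_cases hx : Pc b x
    · rw [Equiv.Perm.extendDomain_apply_subtype _ _ hx, hτ_apply]
      have h5 : (eb b hb) ((eb b hb).symm ⟨x, hx⟩) = ⟨x, hx⟩ := by simp
      rw [h5]
      simp
    · rw [Equiv.Perm.extendDomain_apply_not_subtype _ _ hx]
      rcases (not_Pc_iff b).1 hx with h | h <;> rw [h]
      · rw [hρ_apply, hσl, Equiv.swap_apply_right]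
      · rw [hρ_apply, hσb, Equiv.swap_apply_left]
  have hρρ : ρ * ρ = 1 := by
    ext y
    by_cases hy : Pc b y
    · rw [Equiv.Perm.mul_apply, hρPc y hy, hρPc _ (hσPc y hy), hσσ]; rfl
    · rcases (not_Pc_iff b).1 hy with h | h <;> rw [h] <;>
        simp [Equiv.Perm.mul_apply, hρ_apply, hσl, hσb, Equiv.swap_apply_left,
          Equiv.swap_apply_right]
  refine ⟨τ, mem_MSet.2 ⟨?_, ?_⟩, ?_⟩
  · have h9 : (τ * τ).extendDomain (eb b hb) = 1 := by
      rw [← Equiv.Perm.extendDomain_mul, hext, hρρ]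
    exact Equiv.Perm.extendDomain_eq_one_iff.1 h9
  · intro x h
    have h1 : ((eb b hb).symm ⟨ρ ((eb b hb) x : Fin (n+2)), (hpres _).1 ((eb b hb x).2)⟩ :
        Fin n) = x := by rw [← hτ_apply]; exact h
    have h2 := congrArg (eb b hb) h1
    rw [Equiv.apply_symm_apply] at h2
    have h3 : ρ ((eb b hb) x : Fin (n+2)) = ((eb b hb) x : Fin (n+2)) :=
      congrArg Subtype.val h2
    rw [hρPc _ ((eb b hb) x).2] at h3
    exact hσf _ h3
  · rw [fwd, hext, hρ, ← mul_assoc, Equiv.swap_mul_self, one_mul]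

end Rec
section Rec2
variable {n : ℕ} (b : Fin (n + 2))
lemma sum_fiber_eq (hb : b ≠ lst) : ∑ σ ∈ (MSet (n+2)).filter (fun σ => σ lst = b),
    (Equiv.Perm.sign σ : ℤ) = - Bc n := by
  rw [show - Bc n = ∑ τ ∈ MSet n, (-(Equiv.Perm.sign τ : ℤ)) by
    simp [Bc]]
  refine (Finset.sum_bij (fun τ _ => fwd b hb τ) ?_ ?_ ?_ ?_).symm
  · intro τ hτ
    rcases fwd_mem b hb τ hτ with ⟨h1, h2⟩
    exact Finset.mem_filter.2 ⟨h1, h2⟩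
  · intro τ hτ τ' hτ' h
    exact fwd_inj b hb h
  · intro σ hσ
    rcases Finset.mem_filter.1 hσ with ⟨h1, h2⟩
    rcases fwd_surj b hb σ h1 h2 with ⟨τ, hτ, he⟩
    exact ⟨τ, hτ, he⟩
  · intro τ hτ
    rw [fwd_sign b hb τ]; push_cast; ring

end Rec2

lemma Bc_one : Bc 1 = 0 := by decide
lemma Bc_two : Bc 2 = -1 := by decide

lemma Bc_rec (n : ℕ) : Bc (n+2) = -(n+1) * Bc n := by
  classical
  have h := Finset.sum_fiberwise_of_maps_to (g := fun σ : Equiv.Perm (Fin (n+2)) => σ lst)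
    (t := Finset.univ.erase lst) (s := MSet (n+2))
    (fun σ hσ => Finset.mem_erase.2 ⟨(mem_MSet.1 hσ).2 lst, Finset.mem_univ _⟩)
    (fun σ => (Equiv.Perm.sign σ : ℤ))
  rw [Bc, ← h]
  have h2 : ∀ b ∈ Finset.univ.erase (lst (n := n)),
      ∑ σ ∈ (MSet (n+2)).filter (fun σ => σ lst = b), (Equiv.Perm.sign σ : ℤ) = - Bc n := by
    intro b hb
    exact sum_fiber_eq b (Finset.mem_erase.1 hb).1
  rw [Finset.sum_congr rfl h2, Finset.sum_const, Finset.card_erase_of_mem (Finset.mem_univ _),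
    Finset.card_univ, Fintype.card_fin]
  have h3 : n + 2 - 1 = n + 1 := by omega
  rw [h3]
  simp only [nsmul_eq_mul]
  push_cast
  ring

open MeasureTheory ProbabilityTheory Real
open scoped NNReal ENNReal

lemma integrable_pow_mul_exp {b : ℝ} (hb : 0 < b) (k : ℕ) :
    Integrable (fun x : ℝ => x ^ k * exp (-b * x ^ 2)) := by
  have h := integrable_rpow_mul_exp_neg_mul_sq hb (s := (k : ℝ))
    (lt_of_lt_of_le (by norm_num) (Nat.cast_nonneg k))
  simpa [Real.rpow_natCast] using h

lemma integral_x_exp {b : ℝ} (hb : 0 < b) : ∫ x : ℝ, x * exp (-b * x ^ 2) = 0 := by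
  have hderiv : ∀ x : ℝ, HasDerivAt (fun x : ℝ => -(2*b)⁻¹ * exp (-b * x ^ 2))
      (x * exp (-b * x ^ 2)) x := by
    intro x
    have h1 : HasDerivAt (fun x : ℝ => exp (-b * x ^ 2))
        (exp (-b * x ^ 2) * (-b * (2 * x ^ 1))) x := ((hasDerivAt_pow 2 x).const_mul (-b)).exp
    refine (h1.const_mul (-(2*b)⁻¹)).congr_deriv ?_
    have hb0 : b ≠ 0 := hb.ne'
    field_simp
  exact integral_eq_zero_of_hasDerivAt_of_integrable hderiv
    (integrable_mul_exp_neg_mul_sq hb)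
    ((integrable_exp_neg_mul_sq hb).const_mul _)

lemma integral_sq_exp {b : ℝ} (hb : 0 < b) :
    ∫ x : ℝ, x ^ 2 * exp (-b * x ^ 2) = √(π / b) / (2 * b) := by
  have hderiv : ∀ x : ℝ, HasDerivAt (fun x : ℝ => x * exp (-b * x ^ 2))
      (exp (-b * x ^ 2) - 2 * b * (x ^ 2 * exp (-b * x ^ 2))) x := by
    intro x
    have h1 : HasDerivAt (fun x : ℝ => exp (-b * x ^ 2))
        (exp (-b * x ^ 2) * (-b * (2 * x ^ 1))) x := ((hasDerivAt_pow 2 x).const_mul (-b)).exp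
    have h2 := (hasDerivAt_id x).mul h1
    refine h2.congr_deriv ?_
    simp only [id_eq]
    ring
  have h0 := integral_eq_zero_of_hasDerivAt_of_integrable hderiv
    ((integrable_exp_neg_mul_sq hb).sub ((integrable_pow_mul_exp hb 2).const_mul (2*b)))
    (integrable_mul_exp_neg_mul_sq hb)
  rw [integral_sub (integrable_exp_neg_mul_sq hb)
      ((integrable_pow_mul_exp hb 2).const_mul (2*b)),
    integral_const_mul, integral_gaussian] at h0
  have h2b : (2*b) ≠ 0 := by positivity
  field_simp at h0 ⊢
  linarith

lemma gaussianReal_eq_withDensity (v : ℝ≥0) (hv : v ≠ 0) :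
    gaussianReal 0 v = (volume : Measure ℝ).withDensity
      (fun x => ((gaussianPDFReal 0 v x).toNNReal : ℝ≥0∞)) := by
  rw [gaussianReal_of_var_ne_zero _ hv]
  rfl

lemma gaussianPDFReal_eq (v : ℝ≥0) (x : ℝ) :
    gaussianPDFReal 0 v x = (√(2 * π * v))⁻¹ * exp (-(2*(v:ℝ))⁻¹ * x ^ 2) := by
  rw [gaussianPDFReal]
  congr 2
  rw [sub_zero, div_eq_mul_inv]
  ring

lemma integral_pow_gaussianReal (v : ℝ≥0) (hv : v ≠ 0) (k : ℕ) :
    ∫ x, x ^ k ∂(gaussianReal 0 v) = ∫ x : ℝ, x ^ k * gaussianPDFReal 0 v x := by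
  rw [gaussianReal_eq_withDensity v hv,
    integral_withDensity_eq_integral_smul (f := fun x => (gaussianPDFReal 0 v x).toNNReal)
      (measurable_real_toNNReal.comp (measurable_gaussianPDFReal 0 v)) (fun x => x ^ k)]
  congr 1
  ext x
  rw [NNReal.smul_def, smul_eq_mul, Real.coe_toNNReal _ (gaussianPDFReal_nonneg 0 v x), mul_comm]

lemma integrable_pow_gaussianReal (v : ℝ≥0) (hv : v ≠ 0) (k : ℕ) :
    Integrable (fun x => x ^ k) (gaussianReal 0 v) := by
  have hvpos : (0:ℝ) < v := by
    exact_mod_cast pos_iff_ne_zero.2 hv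
  rw [gaussianReal_eq_withDensity v hv,
    integrable_withDensity_iff (f := fun x => ((gaussianPDFReal 0 v x).toNNReal : ℝ≥0∞))
      (measurable_coe_nnreal_ennreal.comp (measurable_real_toNNReal.comp (measurable_gaussianPDFReal 0 v))) (by filter_upwards with x; exact ENNReal.coe_lt_top)]
  have h : (fun x : ℝ => x ^ k * (((gaussianPDFReal 0 v x).toNNReal : ℝ≥0∞)).toReal) =
      fun x => (√(2*π*v))⁻¹ * (x ^ k * exp (-(2*(v:ℝ))⁻¹ * x^2)) := by
    ext x
    rw [ENNReal.coe_toReal, Real.coe_toNNReal _ (gaussianPDFReal_nonneg 0 v x),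
      gaussianPDFReal_eq]
    ring
  rw [h]
  exact (integrable_pow_mul_exp (by positivity) k).const_mul _

lemma integral_id_gaussianReal (v : ℝ≥0) (hv : v ≠ 0) :
    ∫ x, x ^ 1 ∂(gaussianReal 0 v) = 0 := by
  have hvpos : (0:ℝ) < v := by exact_mod_cast pos_iff_ne_zero.2 hv
  rw [integral_pow_gaussianReal v hv 1]
  have h : (fun x : ℝ => x ^ 1 * gaussianPDFReal 0 v x) =
      fun x => (√(2*π*v))⁻¹ * (x * exp (-(2*(v:ℝ))⁻¹ * x^2)) := by
    ext x; rw [gaussianPDFReal_eq]; ring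
  rw [h, integral_const_mul, integral_x_exp (by positivity), mul_zero]

lemma integral_sq_gaussianReal (v : ℝ≥0) (hv : v ≠ 0) :
    ∫ x, x ^ 2 ∂(gaussianReal 0 v) = v := by
  have hvpos : (0:ℝ) < v := by exact_mod_cast pos_iff_ne_zero.2 hv
  rw [integral_pow_gaussianReal v hv 2]
  have h : (fun x : ℝ => x ^ 2 * gaussianPDFReal 0 v x) =
      fun x => (√(2*π*v))⁻¹ * (x ^ 2 * exp (-(2*(v:ℝ))⁻¹ * x^2)) := by
    ext x; rw [gaussianPDFReal_eq]; ring
  rw [h, integral_const_mul, integral_sq_exp (by positivity)]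
  have h1 : π / (2*(v:ℝ))⁻¹ = 2 * π * v := by
    field_simp
  rw [h1]
  have h2 : √(2 * π * (v:ℝ)) ≠ 0 := by positivity
  field_simp

lemma integral_pow_zero_gaussianReal (v : ℝ≥0) :
    ∫ x, x ^ 0 ∂(gaussianReal 0 v) = 1 := by
  simp

open MeasureTheory ProbabilityTheory Real Equiv
open scoped NNReal ENNReal

section IndepTools
variable {Ω : Type*} [MeasurableSpace Ω] {μ : Measure Ω}

lemma iIndepFun_of_ae_eq {ι : Type*} {X Y : ι → Ω → ℝ}
    (hind : iIndepFun X μ)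
    (h : ∀ i, X i =ᵐ[μ] Y i) :
    iIndepFun Y μ := by
  rw [iIndepFun_iff_measure_inter_preimage_eq_mul] at hind ⊢
  intro S sets hsets
  have hpre : ∀ i : ι, (X i ⁻¹' sets i : Set Ω) =ᵐ[μ] (Y i ⁻¹' sets i) := by
    intro i
    rw [Filter.eventuallyEq_set]
    filter_upwards [h i] with ω hω
    simp [Set.mem_preimage, hω]
  have h1 : (⋂ i ∈ S, Y i ⁻¹' sets i : Set Ω) =ᵐ[μ] (⋂ i ∈ S, X i ⁻¹' sets i) := by
    rw [Filter.eventuallyEq_set]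
    have hb := (MeasureTheory.ae_ball_iff S.countable_toSet).2
      (fun i (_ : i ∈ (S : Set ι)) => h i)
    filter_upwards [hb] with ω hω
    simp only [Set.mem_iInter, Set.mem_preimage]
    constructor
    · intro hmem i hi; rw [hω i hi]; exact hmem i hi
    · intro hmem i hi; rw [← hω i hi]; exact hmem i hi
  rw [measure_congr h1, hind S hsets]
  exact Finset.prod_congr rfl fun i _ => measure_congr (hpre i)

lemma indep_prod_integral {ι : Type*} [IsProbabilityMeasure μ] {f : ι → Ω → ℝ}
    (hmeas : ∀ p, Measurable (f p))
    (hind : iIndepFun f μ)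
    (hint : ∀ p, Integrable (f p) μ) (s : Finset ι) :
    Integrable (fun ω => ∏ p ∈ s, f p ω) μ ∧
      ∫ ω, ∏ p ∈ s, f p ω ∂μ = ∏ p ∈ s, ∫ ω, f p ω ∂μ := by
  classical
  induction s using Finset.cons_induction with
  | empty => simp
  | cons i s hi ih =>
    have hIndep : IndepFun (fun ω => ∏ p ∈ s, f p ω) (f i) μ := by
      have h := hind.indepFun_finset_prod_of_notMem hmeas hi
      rwa [show (∏ j ∈ s, f j) = fun ω => ∏ p ∈ s, f p ω from
        funext fun ω => by simp] at h
    have hcongr : (fun ω => ∏ p ∈ Finset.cons i s hi, f p ω) =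
        fun ω => (∏ p ∈ s, f p ω) * f i ω :=
      funext fun ω => by rw [Finset.prod_cons, mul_comm]
    have hmul : Integrable (fun ω => (∏ p ∈ s, f p ω) * f i ω) μ := by
      have h := hIndep.integrable_mul ih.1 (hint i)
      exact h
    constructor
    · rw [hcongr]; exact hmul
    · rw [hcongr]
      have h2 : ∫ ω, (∏ p ∈ s, f p ω) * f i ω ∂μ =
          (∫ ω, ∏ p ∈ s, f p ω ∂μ) * ∫ ω, f i ω ∂μ := by
        have h := hIndep.integral_mul_eq_mul_integral ih.1.aestronglyMeasurable (hint i).aestronglyMeasurable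
        simpa [Pi.mul_apply] using h
      rw [h2, ih.2, Finset.prod_cons, mul_comm]
end IndepTools

section PairStuff
variable {n : ℕ}

def prP (σ : Equiv.Perm (Fin n)) (i : Fin n) : {p : Fin n × Fin n // p.1 ≤ p.2} :=
  if h : σ i ≤ i then ⟨(σ i, i), h⟩ else ⟨(i, σ i), le_of_lt (not_le.1 h)⟩

def multP (σ : Equiv.Perm (Fin n)) (p : {p : Fin n × Fin n // p.1 ≤ p.2}) : ℕ :=
  (Finset.univ.filter (fun i => prP σ i = p)).card

lemma prP_eq_iff (σ : Equiv.Perm (Fin n)) (j a b : Fin n) (hab : a ≤ b) :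
    prP σ j = ⟨(a, b), hab⟩ ↔ (σ j = a ∧ j = b) ∨ (σ j = b ∧ j = a) := by
  unfold prP
  split_ifs with h
  · constructor
    · intro he
      have h1 : σ j = a ∧ j = b := by
        have := Subtype.ext_iff.1 he
        exact ⟨congrArg Prod.fst this, congrArg Prod.snd this⟩
      exact Or.inl h1
    · rintro (⟨h1, h2⟩ | ⟨h1, h2⟩)
      · exact Subtype.ext (Prod.ext h1 h2)
      · have hba : b ≤ a := by rw [← h1, ← h2]; exact h
        have hab2 : a = b := le_antisymm hab hba
        exact Subtype.ext (Prod.ext (h1.trans hab2.symm) (h2.trans hab2))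
  · constructor
    · intro he
      have h1 : j = a ∧ σ j = b := by
        have := Subtype.ext_iff.1 he
        exact ⟨congrArg Prod.fst this, congrArg Prod.snd this⟩
      exact Or.inr ⟨h1.2, h1.1⟩
    · rintro (⟨h1, h2⟩ | ⟨h1, h2⟩)
      · exfalso; exact h (by rw [h1, h2]; exact hab)
      · exact Subtype.ext (Prod.ext h2 h1)

lemma prod_prP_eq {M : Type*} [CommMonoid M] (σ : Equiv.Perm (Fin n))
    (g : {p : Fin n × Fin n // p.1 ≤ p.2} → M) :
    ∏ i : Fin n, g (prP σ i) = ∏ p : {p : Fin n × Fin n // p.1 ≤ p.2}, g p ^ multP σ p := by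
  classical
  rw [← Finset.prod_fiberwise_of_maps_to (g := prP σ) (t := Finset.univ)
    (fun i _ => Finset.mem_univ _) (fun i => g (prP σ i))]
  refine Finset.prod_congr rfl fun p _ => ?_
  have h1 : ∏ i ∈ Finset.univ.filter (fun i => prP σ i = p), g (prP σ i)
      = ∏ _i ∈ Finset.univ.filter (fun i => prP σ i = p), g p :=
    Finset.prod_congr rfl fun i hi => by rw [(Finset.mem_filter.1 hi).2]
  rw [h1, Finset.prod_const]
  rfl

lemma multP_fixed_point (σ : Equiv.Perm (Fin n)) (i : Fin n) (hfix : σ i = i) :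
    multP σ ⟨(i, i), le_refl i⟩ = 1 := by
  classical
  unfold multP
  rw [show Finset.univ.filter (fun j => prP σ j = ⟨(i, i), le_refl i⟩) = {i} by
    ext j
    simp only [Finset.mem_filter, Finset.mem_univ, true_and, Finset.mem_singleton]
    rw [prP_eq_iff σ j i i (le_refl i)]
    constructor
    · rintro (⟨_, h2⟩ | ⟨_, h2⟩) <;> exact h2
    · rintro rfl; exact Or.inl ⟨hfix, rfl⟩]
  rfl

lemma multP_not_involutive (σ : Equiv.Perm (Fin n)) (i : Fin n) (hni : σ (σ i) ≠ i) :
    multP σ (prP σ i) = 1 := by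
  classical
  rcases hp : prP σ i with ⟨⟨a, b⟩, hab⟩
  have hself := (prP_eq_iff σ i a b hab).1 hp
  unfold multP
  rw [show Finset.univ.filter (fun j => prP σ j = ⟨(a, b), hab⟩) = {i} by
    ext j
    simp only [Finset.mem_filter, Finset.mem_univ, true_and, Finset.mem_singleton]
    rw [prP_eq_iff σ j a b hab]
    rcases hself with ⟨h1, h2⟩ | ⟨h1, h2⟩
    · constructor
      · rintro (⟨g1, g2⟩ | ⟨g1, g2⟩)
        · exact g2.trans h2.symm
        · exfalso; apply hni
          rw [show σ i = j from (h1 ▸ g2 : j = σ i).symm, g1, h2]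
      · rintro rfl; exact Or.inl ⟨h1, h2⟩
    · constructor
      · rintro (⟨g1, g2⟩ | ⟨g1, g2⟩)
        · exfalso; apply hni
          rw [show σ i = j from (h1 ▸ g2 : j = σ i).symm, g1, h2]
        · exact g2.trans h2.symm
      · rintro rfl; exact Or.inr ⟨h1, h2⟩]
  rfl

lemma multP_matching (σ : Equiv.Perm (Fin n)) (hσ2 : σ * σ = 1) (hσf : ∀ i, σ i ≠ i)
    (p : {p : Fin n × Fin n // p.1 ≤ p.2}) :
    multP σ p = 0 ∨ (multP σ p = 2 ∧ p.1.1 ≠ p.1.2) := by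
  classical
  have hσσ : ∀ x, σ (σ x) = x := fun x => by
    have := congrArg (fun s => s x) hσ2; simpa [Equiv.Perm.mul_apply] using this
  rcases p with ⟨⟨a, b⟩, hab⟩
  by_cases h : σ a = b
  · right
    have hba : σ b = a := by rw [← h, hσσ]
    have hne : a ≠ b := fun he => hσf a (by rw [h, he])
    constructor
    · unfold multP
      rw [show Finset.univ.filter (fun j => prP σ j = ⟨(a, b), hab⟩) = {a, b} by
        ext j
        simp only [Finset.mem_filter, Finset.mem_univ, true_and, Finset.mem_insert,
          Finset.mem_singleton]
        rw [prP_eq_iff σ j a b hab]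
        constructor
        · rintro (⟨g1, g2⟩ | ⟨g1, g2⟩)
          · exact Or.inr g2
          · exact Or.inl g2
        · rintro (rfl | rfl)
          · exact Or.inr ⟨h, rfl⟩
          · exact Or.inl ⟨hba, rfl⟩]
      rw [Finset.card_insert_of_notMem (by simpa using hne), Finset.card_singleton]
    · exact hne
  · left
    unfold multP
    rw [show Finset.univ.filter (fun j => prP σ j = ⟨(a, b), hab⟩) = ∅ by
      ext j
      simp only [Finset.mem_filter, Finset.mem_univ, true_and, Finset.notMem_empty,
        iff_false]
      rw [prP_eq_iff σ j a b hab]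
      rintro (⟨g1, g2⟩ | ⟨g1, g2⟩)
      · exact h (by rw [← g1, hσσ, g2])
      · exact h (g2 ▸ g1)]
    rfl

lemma exists_multP_one (σ : Equiv.Perm (Fin n)) (hn : ¬(σ * σ = 1 ∧ ∀ i, σ i ≠ i)) :
    ∃ p, multP σ p = 1 := by
  classical
  by_cases hfix : ∃ i, σ i = i
  · obtain ⟨i, hi⟩ := hfix
    exact ⟨⟨(i, i), le_refl i⟩, multP_fixed_point σ i hi⟩
  · push_neg at hfix
    have h2 : ¬ σ * σ = 1 := fun h => hn ⟨h, hfix⟩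
    have h3 : ∃ i, σ (σ i) ≠ i := by
      by_contra hc
      push_neg at hc
      exact h2 (Equiv.ext fun x => by simpa [Equiv.Perm.mul_apply] using hc x)
    obtain ⟨i, hi⟩ := h3
    exact ⟨prP σ i, multP_not_involutive σ i hi⟩

end PairStuff

open MeasureTheory ProbabilityTheory

/-- A random symmetric `n × n` matrix whose entries are independent (up to symmetry),
standard Gaussian `N(0,1)` off the diagonal and `N(0,2)` on the diagonal. -/
def IsSymmGaussianEnsemble {Ω : Type*} [MeasurableSpace Ω] (μ : Measure Ω) {n : ℕ}
    (G : Ω → Matrix (Fin n) (Fin n) ℝ) : Prop :=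
  (∀ ω, (G ω).IsSymm) ∧
  iIndepFun
    (fun (p : {p : Fin n × Fin n // p.1 ≤ p.2}) ω => G ω p.1.1 p.1.2) μ ∧
  (∀ i j : Fin n, i < j → Measure.map (fun ω => G ω i j) μ = gaussianReal 0 1) ∧
  (∀ i : Fin n, Measure.map (fun ω => G ω i i) μ = gaussianReal 0 2)

lemma integral_det_eq {n : ℕ} {Ω : Type} [MeasurableSpace Ω] (μ : Measure Ω)
    [IsProbabilityMeasure μ] (G : Ω → Matrix (Fin n) (Fin n) ℝ)
    (hG : IsSymmGaussianEnsemble μ G) :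
    ∫ ω, (G ω).det ∂μ = (Bc n : ℝ) := by
  classical
  obtain ⟨hsym, hind, hoff, hdiag⟩ := hG
  set X : {p : Fin n × Fin n // p.1 ≤ p.2} → Ω → ℝ := fun p ω => G ω p.1.1 p.1.2 with hXdef
  set V : {p : Fin n × Fin n // p.1 ≤ p.2} → ℝ≥0 :=
    fun p => if p.1.1 = p.1.2 then 2 else 1 with hVdef
  have hVne : ∀ p, V p ≠ 0 := fun p => by
    simp only [hVdef]; split_ifs <;> norm_num
  have hlaw : ∀ p, Measure.map (X p) μ = gaussianReal 0 (V p) := by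
    intro p
    rcases lt_or_eq_of_le p.2 with hlt | heq
    · rw [show V p = 1 from by simp [hVdef, ne_of_lt hlt]]
      exact hoff _ _ hlt
    · rw [show V p = 2 from by simp [hVdef, heq]]
      have hXp : X p = fun ω => G ω p.1.1 p.1.2 := rfl
      rw [hXp, ← heq]
      exact hdiag p.1.1
  have haem : ∀ p, AEMeasurable (X p) μ := by
    intro p
    by_contra hc
    have h0 := Measure.map_of_not_aemeasurable hc
    rw [hlaw p] at h0
    have h1 : (gaussianReal 0 (V p)) Set.univ = 1 := measure_univ
    rw [h0] at h1
    simp at h1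
  set Y := fun p => (haem p).mk (X p) with hYdef
  have hYmeas : ∀ p, Measurable (Y p) := fun p => (haem p).measurable_mk
  have haeXY : ∀ p, X p =ᵐ[μ] Y p := fun p => (haem p).ae_eq_mk
  have hYlaw : ∀ p, Measure.map (Y p) μ = gaussianReal 0 (V p) := fun p => by
    rw [← Measure.map_congr (haeXY p)]; exact hlaw p
  have hYind : iIndepFun Y μ :=
    iIndepFun_of_ae_eq hind haeXY
  have hYint : ∀ p (k : ℕ), Integrable (fun ω => Y p ω ^ k) μ := by
    intro p k
    have h1 : Integrable (fun x : ℝ => x ^ k) (Measure.map (Y p) μ) := by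
      rw [hYlaw p]; exact integrable_pow_gaussianReal _ (hVne p) k
    exact (integrable_map_measure ((by fun_prop : Measurable fun x : ℝ => x ^ k)).aestronglyMeasurable
      (hYmeas p).aemeasurable).1 h1
  have hmom : ∀ p (k : ℕ), ∫ ω, Y p ω ^ k ∂μ = ∫ x, x ^ k ∂(gaussianReal 0 (V p)) := by
    intro p k
    rw [← hYlaw p, integral_map (hYmeas p).aemeasurable
      ((by fun_prop : Measurable fun x : ℝ => x ^ k)).aestronglyMeasurable]
  have hprod_ae : ∀ σ : Equiv.Perm (Fin n),
      (fun ω => ∏ i, G ω (σ i) i) =ᵐ[μ] (fun ω => ∏ p, Y p ω ^ multP σ p) := by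
    intro σ
    have hall : ∀ᵐ ω ∂μ, ∀ p, X p ω = Y p ω := (MeasureTheory.ae_all_iff).2 haeXY
    filter_upwards [hall] with ω hω
    calc ∏ i, G ω (σ i) i
        = ∏ i, X (prP σ i) ω := by
          refine Finset.prod_congr rfl fun i _ => ?_
          unfold prP
          split_ifs with h
          · rfl
          · exact (hsym ω).apply i (σ i)
      _ = ∏ i, Y (prP σ i) ω := Finset.prod_congr rfl fun i _ => hω _
      _ = ∏ p, Y p ω ^ multP σ p := prod_prP_eq σ (fun p => Y p ω)
  have hprodlem : ∀ σ : Equiv.Perm (Fin n),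
      Integrable (fun ω => ∏ p, Y p ω ^ multP σ p) μ ∧
      ∫ ω, ∏ p, Y p ω ^ multP σ p ∂μ = ∏ p, ∫ ω, Y p ω ^ multP σ p ∂μ := by
    intro σ
    exact indep_prod_integral (f := fun p ω => Y p ω ^ multP σ p)
      (fun p => (hYmeas p).pow_const _)
      (hYind.comp (fun p x => x ^ multP σ p) (fun p => measurable_id.pow_const _))
      (fun p => hYint p _) Finset.univ
  have hIntG : ∀ σ : Equiv.Perm (Fin n), Integrable (fun ω => ∏ i, G ω (σ i) i) μ :=
    fun σ => ((hprodlem σ).1).congr (hprod_ae σ).symm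
  have hint_term : ∀ σ : Equiv.Perm (Fin n),
      ∫ ω, ∏ i, G ω (σ i) i ∂μ = ∏ p, ∫ x, x ^ multP σ p ∂(gaussianReal 0 (V p)) := by
    intro σ
    rw [integral_congr_ae (hprod_ae σ), (hprodlem σ).2]
    exact Finset.prod_congr rfl fun p _ => hmom p _
  have hTval : ∀ σ : Equiv.Perm (Fin n),
      (∏ p, ∫ x, x ^ multP σ p ∂(gaussianReal 0 (V p))) =
        if σ * σ = 1 ∧ ∀ i, σ i ≠ i then (1:ℝ) else 0 := by
    intro σ
    split_ifs with hσ
    · refine Finset.prod_eq_one fun p _ => ?_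
      rcases multP_matching σ hσ.1 hσ.2 p with h0 | ⟨h2, hne⟩
      · rw [h0]; exact integral_pow_zero_gaussianReal _
      · rw [h2, show V p = 1 from by simp [hVdef, hne],
          integral_sq_gaussianReal 1 one_ne_zero]
        norm_num
    · obtain ⟨p, hp⟩ := exists_multP_one σ hσ
      exact Finset.prod_eq_zero (Finset.mem_univ p)
        (by rw [hp]; exact integral_id_gaussianReal _ (hVne p))
  have hdet : (fun ω => (G ω).det) =
      fun ω => ∑ σ : Equiv.Perm (Fin n), ((Equiv.Perm.sign σ : ℤ) : ℝ) * ∏ i, G ω (σ i) i := by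
    funext ω
    rw [Matrix.det_apply]
    exact Finset.sum_congr rfl fun σ _ => by
      simp [Units.smul_def, zsmul_eq_mul]
  rw [hdet, integral_finset_sum _ (fun σ _ => (hIntG σ).const_mul _)]
  simp_rw [integral_const_mul]
  have hterm : ∀ σ : Equiv.Perm (Fin n),
      ((Equiv.Perm.sign σ : ℤ) : ℝ) * ∫ ω, ∏ i, G ω (σ i) i ∂μ
      = if σ * σ = 1 ∧ ∀ i, σ i ≠ i then ((Equiv.Perm.sign σ : ℤ) : ℝ) else 0 := by
    intro σ
    rw [hint_term σ, hTval σ]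
    split_ifs
    · rw [mul_one]
    · rw [mul_zero]
  rw [Finset.sum_congr rfl (fun σ _ => hterm σ)]
  rw [Bc, MSet]
  push_cast
  rw [Finset.sum_filter]

/-- `A n = E[det G]` satisfies the recursion `A n = -(n-1) A (n-2)` for `n ≥ 2`,
with initial values `A 1 = 0` and `A 2 = -1`. -/
theorem expected_det_symm_gaussian_recursion :
    (∀ (n : ℕ), 2 ≤ n →
      ∀ (Ω Ω' : Type) (_ : MeasurableSpace Ω) (_ : MeasurableSpace Ω')
        (μ : Measure Ω) (μ' : Measure Ω'),
        IsProbabilityMeasure μ → IsProbabilityMeasure μ' →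
        ∀ (G : Ω → Matrix (Fin n) (Fin n) ℝ)
          (G' : Ω' → Matrix (Fin (n - 2)) (Fin (n - 2)) ℝ),
          IsSymmGaussianEnsemble μ G → IsSymmGaussianEnsemble μ' G' →
          ∫ ω, (G ω).det ∂μ = -((n : ℝ) - 1) * ∫ ω, (G' ω).det ∂μ') ∧
    (∀ (Ω : Type) (_ : MeasurableSpace Ω) (μ : Measure Ω), IsProbabilityMeasure μ →
      ∀ (G : Ω → Matrix (Fin 1) (Fin 1) ℝ), IsSymmGaussianEnsemble μ G →
        ∫ ω, (G ω).det ∂μ = 0) ∧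
    (∀ (Ω : Type) (_ : MeasurableSpace Ω) (μ : Measure Ω), IsProbabilityMeasure μ →
      ∀ (G : Ω → Matrix (Fin 2) (Fin 2) ℝ), IsSymmGaussianEnsemble μ G →
        ∫ ω, (G ω).det ∂μ = -1) := by
  refine ⟨?_, ?_, ?_⟩
  · intro n hn Ω Ω' mΩ mΩ' μ μ' hμ hμ' G G' hG hG'
    rw [integral_det_eq μ G hG, integral_det_eq μ' G' hG']
    have h1 : n - 2 + 2 = n := by omega
    have h2 : Bc n = -((n - 2 : ℕ) + 1) * Bc (n - 2) := by
      conv_lhs => rw [← h1]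
      exact Bc_rec (n - 2)
    rw [h2]
    push_cast [Nat.cast_sub hn]
    ring
  · intro Ω mΩ μ hμ G hG
    rw [integral_det_eq μ G hG, Bc_one]
    norm_num
  · intro Ω mΩ μ hμ G hG
    rw [integral_det_eq μ G hG, Bc_two]
    norm_num
end

section
/- With the overlaps p_{kℓ} as above (p_{kk} = Σ_{α∈I}u_k(α)² − C₀, p_{kℓ} = Σ_{α∈I}u_k(α)u_ℓ(α)) and the operator X = X_{k₁k₂} = Σ_α(u_{k₁}(α)∂_{u_{k₂}(α)} − u_{k₂}(α)∂_{u_{k₁}(α)}), one has X²(p_{k₁k₁}p_{k₂k₂} − p_{k₁k₂}²) = 0. -/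
/-- The overlap `p_{kℓ} = Σ_{α∈I} u_k(α) u_ℓ(α) − C₀·1_{k=ℓ}` as a function of the
configuration of vectors `u : Fin N → Fin N → ℝ`. -/
def pOv {N : ℕ} (I : Finset (Fin N)) (C₀ : ℝ) (k l : Fin N)
    (u : Fin N → Fin N → ℝ) : ℝ :=
  (∑ α ∈ I, u k α * u l α) - if k = l then C₀ else 0

/-- The rotation generator `X_{kℓ} = Σ_α (u_k(α) ∂_{u_ℓ(α)} − u_ℓ(α) ∂_{u_k(α)})`
acting on smooth functions of the configuration `u`. -/
noncomputable def XU {N : ℕ} (k l : Fin N) (f : (Fin N → Fin N → ℝ) → ℝ)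
    (u : Fin N → Fin N → ℝ) : ℝ :=
  ∑ α : Fin N,
    (u k α * fderiv ℝ f u (Pi.single l (Pi.single α 1))
      - u l α * fderiv ℝ f u (Pi.single k (Pi.single α 1)))

noncomputable def eProj {N : ℕ} (k α : Fin N) : (Fin N → Fin N → ℝ) →L[ℝ] ℝ :=
  (ContinuousLinearMap.proj α).comp
    (ContinuousLinearMap.proj k : (Fin N → Fin N → ℝ) →L[ℝ] (Fin N → ℝ))

noncomputable def pD {N : ℕ} (I : Finset (Fin N)) (u : Fin N → Fin N → ℝ)
    (k l : Fin N) : (Fin N → Fin N → ℝ) →L[ℝ] ℝ :=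
  ∑ α ∈ I, (u k α • eProj l α + u l α • eProj k α)

lemma hasFDerivAt_pOv {N : ℕ} (I : Finset (Fin N)) (C₀ : ℝ) (k l : Fin N)
    (u : Fin N → Fin N → ℝ) :
    HasFDerivAt (pOv I C₀ k l) (pD I u k l) u := by
  have h1 : pOv I C₀ k l
      = fun v => (∑ α ∈ I, (fun w : Fin N → Fin N → ℝ => eProj k α w * eProj l α w) v)
          - (if k = l then C₀ else 0) := rfl
  rw [h1]
  apply HasFDerivAt.sub_const
  exact HasFDerivAt.fun_sum fun α _ => ((eProj k α).hasFDerivAt.mul (eProj l α).hasFDerivAt)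

lemma pD_apply {N : ℕ} (I : Finset (Fin N)) (u : Fin N → Fin N → ℝ)
    (k l m β : Fin N) :
    pD I u k l (Pi.single m (Pi.single β 1))
      = (if l = m ∧ β ∈ I then u k β else 0) + (if k = m ∧ β ∈ I then u l β else 0) := by
  classical
  have he : ∀ a α : Fin N, eProj a α (Pi.single m (Pi.single β 1))
      = if a = m then (if α = β then (1:ℝ) else 0) else 0 := by
    intro a α
    by_cases ham : a = m <;> simp [eProj, ham, Pi.single_apply]
  simp only [pD, ContinuousLinearMap.sum_apply, ContinuousLinearMap.add_apply,
    ContinuousLinearMap.smul_apply, he, smul_eq_mul, Finset.sum_add_distrib]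
  by_cases hl : l = m <;> by_cases hk : k = m <;> by_cases hb : β ∈ I <;>
    simp [hl, hk, hb, mul_ite, Finset.sum_ite_eq', Finset.sum_ite_eq]

lemma inner_zero {N : ℕ} (I : Finset (Fin N)) (C₀ : ℝ) (k₁ k₂ : Fin N)
    (h : k₁ ≠ k₂) (v : Fin N → Fin N → ℝ) :
    XU k₁ k₂
        (fun w => pOv I C₀ k₁ k₁ w * pOv I C₀ k₂ k₂ w - (pOv I C₀ k₁ k₂ w) ^ 2) v
      = 0 := by
  classical
  set a := pOv I C₀ k₁ k₁ v with ha'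
  set b := pOv I C₀ k₂ k₂ v with hb'
  set c := pOv I C₀ k₁ k₂ v with hc'
  have ha := hasFDerivAt_pOv I C₀ k₁ k₁ v
  have hb := hasFDerivAt_pOv I C₀ k₂ k₂ v
  have hc := hasFDerivAt_pOv I C₀ k₁ k₂ v
  have hsq : HasFDerivAt (fun w => (pOv I C₀ k₁ k₂ w) ^ 2)
      (c • pD I v k₁ k₂ + c • pD I v k₁ k₂) v := by
    have := hc.mul hc
    have h2 : (fun w => (pOv I C₀ k₁ k₂ w) ^ 2)
        = fun w => pOv I C₀ k₁ k₂ w * pOv I C₀ k₁ k₂ w := by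
      funext w; ring
    rw [h2]; exact this
  have hf : HasFDerivAt
      (fun w => pOv I C₀ k₁ k₁ w * pOv I C₀ k₂ k₂ w - (pOv I C₀ k₁ k₂ w) ^ 2)
      ((a • pD I v k₂ k₂ + b • pD I v k₁ k₁)
        - (c • pD I v k₁ k₂ + c • pD I v k₁ k₂)) v :=
    (ha.mul hb).sub hsq
  have hfd := hf.fderiv
  have h' : k₂ ≠ k₁ := h.symm
  have step1 : XU k₁ k₂
        (fun w => pOv I C₀ k₁ k₁ w * pOv I C₀ k₂ k₂ w - (pOv I C₀ k₁ k₂ w) ^ 2) v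
      = ∑ α : Fin N, (if α ∈ I then
          2 * a * (v k₁ α * v k₂ α) - 2 * c * (v k₁ α * v k₁ α)
          - 2 * b * (v k₁ α * v k₂ α) + 2 * c * (v k₂ α * v k₂ α) else 0) := by
    simp only [XU, hfd, ContinuousLinearMap.sub_apply, ContinuousLinearMap.add_apply,
      ContinuousLinearMap.smul_apply, pD_apply, smul_eq_mul]
    refine Finset.sum_congr rfl fun α _ => ?_
    by_cases hα : α ∈ I <;> simp [h, h', hα] <;> ring
  rw [step1, Finset.sum_ite_mem, Finset.univ_inter]
  have hS11 : (∑ α ∈ I, v k₁ α * v k₁ α) = a + C₀ := by simp [ha', pOv]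
  have hS22 : (∑ α ∈ I, v k₂ α * v k₂ α) = b + C₀ := by simp [hb', pOv]
  have hS12 : (∑ α ∈ I, v k₁ α * v k₂ α) = c := by simp [hc', pOv, h]
  simp only [Finset.sum_add_distrib, Finset.sum_sub_distrib, ← Finset.mul_sum,
    hS11, hS22, hS12]
  ring

/-- Two-particle Fermionic eigenvector moment flow identity:
`X_{k₁k₂}² (p_{k₁k₁} p_{k₂k₂} − p_{k₁k₂}²) = 0`. -/
theorem Xrot_sq_det_two_particles {N : ℕ} (I : Finset (Fin N)) (C₀ : ℝ)
    (k₁ k₂ : Fin N) (h : k₁ ≠ k₂) (u : Fin N → Fin N → ℝ) :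
    XU k₁ k₂ (XU k₁ k₂
        (fun v => pOv I C₀ k₁ k₁ v * pOv I C₀ k₂ k₂ v - (pOv I C₀ k₁ k₂ v) ^ 2)) u
      = 0 := by
  have hz : XU k₁ k₂
      (fun w => pOv I C₀ k₁ k₁ w * pOv I C₀ k₂ k₂ w - (pOv I C₀ k₁ k₂ w) ^ 2)
      = fun _ => (0:ℝ) := funext fun v => inner_zero I C₀ k₁ k₂ h v
  rw [hz]
  simp [XU]
end
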